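/- For all moulds A, B in ARI, swap(ari(swap(A), swap(B))) = axit(B, -push(B))·A - axit(A, -push(A))·B + lu(A,B), where ari on the left is the Lie bracket on v-moulds and axit(B,C)·A = amit(B)·A + anit(C)·A on u-moulds. -/

import Mathlib

open List

variable {K : Type*} [Field K] [CharZero K]

/-- The multiset (as a list, with multiplicity) of shuffles of two words. -/
def shuffles {α : Type*} : List α → List α → List (List α)
  | [], v => [v]
  | u, [] => [u]
  | x :: u, y :: v =>
      ((shuffles u (y :: v)).map (x :: ·)) ++ ((shuffles (x :: u) v).map (y :: ·))
  termination_by u v => u.length + v.length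

/-- A mould (at the level of evaluations) is alternal if all its shuffle sums over
pairs of nonempty words vanish. -/
def Alternal (A : List K → K) : Prop :=
  ∀ u v : List K, u ≠ [] → v ≠ [] → ((shuffles u v).map A).sum = 0

/-- mould multiplication `mu`. -/
def mu (A B : List K → K) : List K → K :=
  fun w => ∑ k ∈ Finset.range (w.length + 1), A (w.take k) * B (w.drop k)

/-- `lu(A,B) = mu(A,B) - mu(B,A)`. -/
def lu (A B : List K → K) : List K → K :=
  fun w => mu A B w - mu B A w

/-- All decompositions of a word into two consecutive subwords. -/
def splits2 {α : Type*} (w : List α) : List (List α × List α) :=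
  (List.range (w.length + 1)).map fun k => (w.take k, w.drop k)

/-- All decompositions of a word into three consecutive subwords. -/
def splits3 {α : Type*} (w : List α) : List (List α × List α × List α) :=
  (splits2 w).flatMap fun p => (splits2 p.2).map fun q => (p.1, q.1, q.2)

/-- Add `s` to the first letter of a word. -/
def addFirst (s : K) : List K → List K
  | [] => []
  | x :: xs => (x + s) :: xs

/-- Add `s` to the last letter of a word. -/
def addLast (s : K) : List K → List K
  | [] => []
  | [x] => [x + s]
  | x :: xs => x :: addLast s xs

/-- `amit` for u-moulds: `(amit(B)·A)(w) = Σ_{w=abc, b,c≠∅} A(a⌈c) B(b)`. -/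
def amitU (B A : List K → K) : List K → K := fun w =>
  ((splits3 w).map fun p =>
    match p with
    | (_, [], _) => 0
    | (_, _, []) => 0
    | (a, b, c) => A (a ++ addFirst b.sum c) * B b).sum

/-- `anit` for u-moulds: `(anit(B)·A)(w) = Σ_{w=abc, a,b≠∅} A(a⌉c) B(b)`. -/
def anitU (B A : List K → K) : List K → K := fun w =>
  ((splits3 w).map fun p =>
    match p with
    | ([], _, _) => 0
    | (_, [], _) => 0
    | (a, b, c) => A (addLast b.sum a ++ c) * B b).sum

/-- `arit(B)·A = amit(B)·A - anit(B)·A` on u-moulds. -/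
def aritU (B A : List K → K) : List K → K :=
  fun w => amitU B A w - anitU B A w

/-- the ari bracket on u-moulds. -/
def ariU (A B : List K → K) : List K → K :=
  fun w => aritU B A w + lu A B w - aritU A B w

/-- `amit` for v-moulds. -/
def amitV (B A : List K → K) : List K → K := fun w =>
  ((splits3 w).map fun p =>
    match p with
    | (_, [], _) => 0
    | (_, _, []) => 0
    | (a, b, c0 :: c') => A (a ++ c0 :: c') * B (b.map (fun x => x - c0))).sum

/-- `anit` for v-moulds. -/
def anitV (B A : List K → K) : List K → K := fun w =>
  ((splits3 w).map fun p =>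
    match p with
    | ([], _, _) => 0
    | (_, [], _) => 0
    | (a, b, c) => A (a ++ c) * B (b.map (fun x => x - a.getLastD 0))).sum

/-- `arit(B)·A = amit(B)·A - anit(B)·A` on v-moulds. -/
def aritV (B A : List K → K) : List K → K :=
  fun w => amitV B A w - anitV B A w

/-- the ari bracket on v-moulds. -/
def ariV (A B : List K → K) : List K → K :=
  fun w => aritV B A w + lu A B w - aritV A B w

/-- `neg(A)(u_1,...,u_r) = A(-u_1,...,-u_r)`. -/
def negM (A : List K → K) : List K → K := fun w => A (w.map fun x => -x)

/-- `push(A)(u_1,...,u_r) = A(-u_1-⋯-u_r, u_1, ..., u_{r-1})`. -/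
def pushM (A : List K → K) : List K → K := fun w =>
  match w with
  | [] => A []
  | _ :: _ => A ((-w.sum) :: w.dropLast)

/-- `mantar(A)(u_1,...,u_r) = (-1)^{r-1} A(u_r,...,u_1)`. -/
def mantarM (A : List K → K) : List K → K :=
  fun w => (-1 : K) ^ (w.length + 1) * A w.reverse

/-- argument list for swap from u-moulds to v-moulds:
`(v_1,...,v_r) ↦ (v_r, v_{r-1}-v_r, ..., v_1-v_2)`. -/
def swapUargs (w : List K) : List K :=
  List.zipWith (· - ·) w.reverse (0 :: w.reverse)

/-- argument list for swap from v-moulds to u-moulds: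
`(u_1,...,u_r) ↦ (u_1+⋯+u_r, u_1+⋯+u_{r-1}, ..., u_1)`. -/
def swapVargs (w : List K) : List K :=
  (List.range w.length).map fun i => (w.take (w.length - i)).sum

/-- swap, sending a u-mould to a v-mould. -/
def swapUV (A : List K → K) : List K → K := fun w => A (swapUargs w)

/-- swap, sending a v-mould to a u-mould. -/
def swapVU (A : List K → K) : List K → K := fun w => A (swapVargs w)

/-- A constant-valued mould: its value depends only on the depth. -/
def IsConstantMould (C : List K → K) : Prop :=
  ∀ w w' : List K, w.length = w'.length → C w = C w'


/-- `axit(B,C)·A = amit(B)·A + anit(C)·A` on u-moulds. -/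
def axitU (B C A : List K → K) : List K → K :=
  fun w => amitU B A w + anitU C A w


/-! ### Auxiliary machinery: partial sums and difference lists -/

/-- partial sums of a list with starting offset `a`. -/
def pslX (a : K) : List K → List K
  | [] => []
  | x :: xs => (a + x) :: pslX (a + x) xs

/-- difference list with starting offset `a`. -/
def dfsX (a : K) (l : List K) : List K := List.zipWith (· - ·) l (a :: l)

lemma dfsX_cons (a x : K) (l : List K) : dfsX a (x :: l) = (x - a) :: dfsX x l := rfl

lemma swapUargs_eq_dfsX (x : List K) : swapUargs x = dfsX 0 x.reverse := rfl

lemma pslX_length (a : K) (l : List K) : (pslX a l).length = l.length := by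
  induction l generalizing a with
  | nil => rfl
  | cons x xs ih => simp [pslX, ih]

lemma dfsX_pslX_self (a : K) (l : List K) : dfsX a (pslX a l) = l := by
  induction l generalizing a with
  | nil => rfl
  | cons x xs ih =>
    rw [pslX, dfsX_cons, ih]
    congr 1
    ring

lemma dfsX_pslX (b a : K) (l : List K) : dfsX b (pslX a l) = addFirst (a - b) l := by
  cases l with
  | nil => rfl
  | cons x xs =>
    rw [pslX, dfsX_cons, dfsX_pslX_self, addFirst]
    congr 1
    ring

lemma pslX_append (a : K) (l m : List K) :
    pslX a (l ++ m) = pslX a l ++ pslX (a + l.sum) m := by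
  induction l generalizing a with
  | nil => simp [pslX]
  | cons x xs ih => simp [pslX, ih, add_assoc]

lemma dfsX_pslX_append (b a : K) (l m : List K) :
    dfsX b (pslX b l ++ pslX a m) = l ++ addFirst (a - (b + l.sum)) m := by
  induction l generalizing b with
  | nil => simpa [pslX] using dfsX_pslX b a m
  | cons x xs ih =>
    rw [pslX, List.cons_append, dfsX_cons, ih]
    have h1 : b + x - b = x := by ring
    have h2 : a - (b + x + xs.sum) = a - (b + (x :: xs).sum) := by
      rw [List.sum_cons]; ring
    rw [h1, h2]
    rfl

lemma pslX_take (a : K) (l : List K) (m : ℕ) : (pslX a l).take m = pslX a (l.take m) := by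
  induction l generalizing a m with
  | nil => simp [pslX]
  | cons x xs ih =>
    cases m with
    | zero => simp [pslX]
    | succ m => simp [pslX, ih]

lemma pslX_drop (a : K) (l : List K) (m : ℕ) :
    (pslX a l).drop m = pslX (a + (l.take m).sum) (l.drop m) := by
  induction l generalizing a m with
  | nil => simp [pslX]
  | cons x xs ih =>
    cases m with
    | zero => simp [pslX]
    | succ m =>
      simp only [pslX, List.drop_succ_cons, List.take_succ_cons, List.sum_cons]
      rw [ih, ← add_assoc]

lemma pslX_map_sub (a c : K) (l : List K) :
    (pslX a l).map (fun x => x - c) = pslX (a - c) l := by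
  induction l generalizing a with
  | nil => rfl
  | cons x xs ih =>
    simp only [pslX, List.map_cons, ih]
    have h1 : a + x - c = a - c + x := by ring
    rw [h1]

lemma pslX_getElem (a : K) (l : List K) (i : ℕ) (h : i < (pslX a l).length) :
    (pslX a l)[i] = a + (l.take (i + 1)).sum := by
  induction l generalizing a i with
  | nil => simp [pslX] at h
  | cons x xs ih =>
    cases i with
    | zero => simp [pslX]
    | succ i =>
      have h' : i < (pslX (a + x) xs).length := by
        simpa [pslX] using h
      show (pslX (a + x) xs)[i] = _
      rw [ih _ _ h']
      simp [add_assoc]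

lemma swapVargs_length (w : List K) : (swapVargs w).length = w.length := by
  simp [swapVargs]

lemma swapVargs_getElem (w : List K) (i : ℕ) (h : i < (swapVargs w).length) :
    (swapVargs w)[i] = (w.take (w.length - i)).sum := by
  simp [swapVargs]

lemma swapVargs_reverse (w : List K) : (swapVargs w).reverse = pslX 0 w := by
  apply List.ext_getElem
  · simp [swapVargs, pslX_length]
  · intro i h1 h2
    rw [pslX_getElem, List.getElem_reverse, swapVargs_getElem, zero_add]
    congr 2
    rw [pslX_length] at h2
    rw [swapVargs_length]
    omega

set_option linter.unusedSectionVars false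

lemma rev_take_swapVargs (w : List K) (k : ℕ) :
    ((swapVargs w).take k).reverse
      = pslX ((w.take (w.length - k)).sum) (w.drop (w.length - k)) := by
  rw [List.reverse_take, swapVargs_length, swapVargs_reverse, pslX_drop, zero_add]

lemma rev_drop_swapVargs (w : List K) (j : ℕ) :
    ((swapVargs w).drop j).reverse = pslX 0 (w.take (w.length - j)) := by
  rw [List.reverse_drop, swapVargs_length, swapVargs_reverse, pslX_take]

/-- F1: the u-side form of `swap` applied to `a ⌢ c` pieces. -/
lemma swapU_F1 (w : List K) (k l : ℕ) (h : k + l ≤ w.length) :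
    swapUargs ((swapVargs w).take k ++ (swapVargs w).drop (k + l)) =
      w.take (w.length - k - l) ++
        addFirst (((w.drop (w.length - k - l)).take l).sum) (w.drop (w.length - k)) := by
  rw [swapUargs_eq_dfsX, List.reverse_append, rev_drop_swapVargs, rev_take_swapVargs,
    dfsX_pslX_append]
  have e1 : w.length - (k + l) = w.length - k - l := by omega
  rw [e1]
  have e2 : w.length - k = (w.length - k - l) + l := by omega
  have e4 : w.take (w.length - k)
      = w.take (w.length - k - l) ++ (w.drop (w.length - k - l)).take l := by
    conv_lhs => rw [e2]
    rw [List.take_add]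
  have e3 : (w.take (w.length - k)).sum - (0 + (w.take (w.length - k - l)).sum)
      = ((w.drop (w.length - k - l)).take l).sum := by
    rw [e4, List.sum_append]; ring
  rw [e3]

/-- F3: the u-side form of the middle factor in `amitV`. -/
lemma swapU_F3 (w : List K) (k l : ℕ) (h : k + l ≤ w.length) :
    swapUargs ((((swapVargs w).drop k).take l).map
        (fun x => x - (w.take (w.length - k - l)).sum)) =
      (w.drop (w.length - k - l)).take l := by
  rw [swapUargs_eq_dfsX, ← List.map_reverse, List.reverse_take, List.length_drop,
    swapVargs_length, rev_drop_swapVargs, pslX_drop, zero_add]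
  rw [List.take_take, List.drop_take]
  have e1 : min (w.length - k - l) (w.length - k) = w.length - k - l := by omega
  have e2 : w.length - k - (w.length - k - l) = l := by omega
  rw [e1, e2, pslX_map_sub]
  have e3 : (w.take (w.length - k - l)).sum - (w.take (w.length - k - l)).sum = 0 := by ring
  rw [e3, dfsX_pslX_self]

/-- the `addFirst` form of a push-shifted block. -/
lemma addFirst_block (w : List K) (m l : ℕ) (hl : 1 ≤ l) (h : m + l < w.length) :
    addFirst ((w.take m).sum - (w.take (m + l + 1)).sum) ((w.drop m).take l) =
      (-(((w.drop (m + 1)).take l).sum)) :: ((w.drop (m + 1)).take l).dropLast := by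
  have h1 : m < w.length := by omega
  rw [List.drop_eq_getElem_cons h1]
  obtain ⟨l', rfl⟩ : ∃ l', l = l' + 1 := ⟨l - 1, by omega⟩
  rw [List.take_succ_cons]
  have htake : w.take (m + 1) = w.take m ++ [w[m]] := by
    rw [show m + 1 = m + 1 from rfl, List.take_succ, List.getElem?_eq_getElem h1]
    rfl
  have hsum : w.take (m + (l' + 1) + 1) = w.take (m + 1) ++ (w.drop (m + 1)).take (l' + 1) := by
    rw [show m + (l' + 1) + 1 = (m + 1) + (l' + 1) by omega, List.take_add]
  have hdl : ((w.drop (m + 1)).take (l' + 1)).dropLast = (w.drop (m + 1)).take l' := by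
    rw [List.dropLast_eq_take, List.take_take, List.length_take, List.length_drop]
    congr 1
    omega
  have hhead : ((w.drop (m+1)).take (l' + 1))
      = (w.drop (m+1)).take l' ++ [w[m + 1 + l']] := by
    have h2 : l' < (w.drop (m+1)).length := by simp; omega
    rw [List.take_succ, List.getElem?_eq_getElem h2, List.getElem_drop]
    rfl
  rw [addFirst, hdl]
  congr 1
  rw [hsum, htake, hhead]
  simp only [List.sum_append, List.sum_cons, List.sum_nil]
  ring

/-- F4: the u-side form of the middle factor in `anitV`. -/
lemma swapU_F4 (w : List K) (k l : ℕ) (hk : 1 ≤ k) (hl : 1 ≤ l) (h : k + l ≤ w.length) :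
    swapUargs ((((swapVargs w).drop k).take l).map
        (fun x => x - (w.take (w.length - k + 1)).sum)) =
      (-(((w.drop (w.length - k - l + 1)).take l).sum)) ::
        ((w.drop (w.length - k - l + 1)).take l).dropLast := by
  rw [swapUargs_eq_dfsX, ← List.map_reverse, List.reverse_take, List.length_drop,
    swapVargs_length, rev_drop_swapVargs, pslX_drop, zero_add]
  rw [List.take_take, List.drop_take]
  have e1 : min (w.length - k - l) (w.length - k) = w.length - k - l := by omega
  have e2 : w.length - k - (w.length - k - l) = l := by omega
  rw [e1, e2, pslX_map_sub, dfsX_pslX]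
  have e3 : (w.take (w.length - k - l)).sum - (w.take (w.length - k + 1)).sum - 0
      = (w.take (w.length - k - l)).sum - (w.take ((w.length - k - l) + l + 1)).sum := by
    rw [show (w.length - k - l) + l + 1 = w.length - k + 1 by omega]
    ring
  rw [e3, addFirst_block w (w.length - k - l) l hl (by omega)]

/-- P2: last entry of a prefix of `swapVargs`. -/
lemma getLastD_take_swapVargs (w : List K) (k : ℕ) (hk : 1 ≤ k) (h : k ≤ w.length) :
    ((swapVargs w).take k).getLastD 0 = (w.take (w.length - k + 1)).sum := by
  have h1 : k - 1 < (swapVargs w).length := by rw [swapVargs_length]; omega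
  have e : (swapVargs w).take k = (swapVargs w).take (k-1) ++ [(swapVargs w)[k-1]] := by
    conv_lhs => rw [show k = (k-1) + 1 by omega]
    rw [List.take_succ, List.getElem?_eq_getElem h1]
    rfl
  rw [e, List.getLastD_concat, swapVargs_getElem]
  congr 2
  omega

/-- drop-cons form of `swapVargs`. -/
lemma swapVargs_drop_cons (w : List K) (m : ℕ) (h : m < w.length) :
    (swapVargs w).drop m = (w.take (w.length - m)).sum :: (swapVargs w).drop (m + 1) := by
  have h1 : m < (swapVargs w).length := by rw [swapVargs_length]; exact h
  rw [List.drop_eq_getElem_cons h1, swapVargs_getElem]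

/-- L3: `addLast` form versus `addFirst` form. -/
lemma addLast_concat (s : K) (xs : List K) (x : K) :
    addLast s (xs ++ [x]) = xs ++ [x + s] := by
  induction xs with
  | nil => rfl
  | cons y ys ih =>
    rcases ys with _ | ⟨z, zs⟩
    · rfl
    · exact congrArg (y :: ·) ih

lemma addLast_form (w : List K) (k l : ℕ) (hk : 1 ≤ k) (hl : 1 ≤ l) (h : k + l ≤ w.length) :
    addLast (((w.drop k).take l).sum) (w.take k) ++ (w.drop k).drop l =
      w.take (k - 1) ++ addFirst (((w.drop (k - 1)).take l).sum) (w.drop (k + l - 1)) := by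
  have hk1 : k - 1 < w.length := by omega
  have e1 : w.take k = w.take (k - 1) ++ [w[k - 1]] := by
    conv_lhs => rw [show k = (k-1) + 1 by omega]
    rw [List.take_succ, List.getElem?_eq_getElem hk1]
    rfl
  have e2 : w.drop (k + l - 1) = w[k + l - 1] :: w.drop (k + l) := by
    have h2 : k + l - 1 < w.length := by omega
    have e := List.drop_eq_getElem_cons h2
    rw [show k + l - 1 + 1 = k + l by omega] at e
    exact e
  have e3 : w.drop (k - 1) = w[k - 1] :: w.drop k := by
    have e := List.drop_eq_getElem_cons hk1
    rw [show k - 1 + 1 = k by omega] at e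
    exact e
  have e4 : (w.drop (k-1)).take l = w[k-1] :: (w.drop k).take (l - 1) := by
    rw [e3]
    conv_lhs => rw [show l = (l - 1) + 1 by omega]
    rw [List.take_succ_cons]
  have e5 : (w.drop k).take l = (w.drop k).take (l - 1) ++ [w[k + l - 1]] := by
    have h2 : l - 1 < (w.drop k).length := by simp; omega
    conv_lhs => rw [show l = (l - 1) + 1 by omega]
    rw [List.take_succ, List.getElem?_eq_getElem h2, List.getElem_drop]
    have : w[k + (l-1)]'(by omega) = w[k + l - 1]'(by omega) := by congr 1; omega
    rw [this]
    rfl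
  rw [e1, addLast_concat, e2, e4, List.drop_drop, addFirst, List.append_assoc,
    List.singleton_append]
  congr 2
  rw [e5]
  simp only [List.sum_append, List.sum_cons, List.sum_nil]
  ring

/-! ### Summation plumbing -/

lemma sum_splits2_eq {α : Type*} (x : List α) (f : List α × List α → K) :
    ((splits2 x).map f).sum = ∑ k ∈ Finset.range (x.length + 1), f (x.take k, x.drop k) := by
  rw [splits2, List.map_map]
  rfl

lemma sum_flatMap_eq {α β : Type*} (L : List α) (g : α → List β) (f : β → K) :
    ((L.flatMap g).map f).sum = (L.map (fun a => ((g a).map f).sum)).sum := by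
  induction L with
  | nil => rfl
  | cons q L ih => simp [List.flatMap_cons, ih]

lemma sum_splits3_eq {α : Type*} (x : List α) (f : List α × List α × List α → K) :
    ((splits3 x).map f).sum
      = ∑ k ∈ Finset.range (x.length + 1), ∑ l ∈ Finset.range (x.length - k + 1),
          f (x.take k, (x.drop k).take l, (x.drop k).drop l) := by
  rw [splits3, sum_flatMap_eq, sum_splits2_eq]
  refine Finset.sum_congr rfl fun k hk => ?_
  rw [List.map_map, sum_splits2_eq, List.length_drop]
  exact Finset.sum_congr rfl fun l _ => rfl

def Dset (n : ℕ) : Finset (ℕ × ℕ) :=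
  (Finset.range (n + 1) ×ˢ Finset.range (n + 1)).filter (fun p => p.1 + p.2 ≤ n)

lemma mem_Dset {n : ℕ} {p : ℕ × ℕ} : p ∈ Dset n ↔ p.1 + p.2 ≤ n := by
  simp only [Dset, Finset.mem_filter, Finset.mem_product, Finset.mem_range]
  omega

lemma sum_D (n : ℕ) (t : ℕ → ℕ → K) :
    ∑ k ∈ Finset.range (n + 1), ∑ l ∈ Finset.range (n - k + 1), t k l
      = ∑ p ∈ Dset n, t p.1 p.2 := by
  rw [Dset, Finset.sum_filter, Finset.sum_product]
  refine Finset.sum_congr rfl fun k hk => ?_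
  have hk' : k ≤ n := by simpa [Nat.lt_succ_iff] using hk
  rw [← Finset.sum_filter]
  apply Finset.sum_congr ?_ (fun _ _ => rfl)
  ext l
  simp only [Finset.mem_filter, Finset.mem_range]
  omega

lemma sum_D_invol (n : ℕ) (f : ℕ × ℕ → K) :
    ∑ p ∈ Dset n, f (n - p.1 - p.2, p.2) = ∑ p ∈ Dset n, f p := by
  refine Finset.sum_nbij' (fun p => (n - p.1 - p.2, p.2)) (fun p => (n - p.1 - p.2, p.2))
    ?_ ?_ ?_ ?_ ?_
  · intro p hp; rw [mem_Dset] at *; simp; omega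
  · intro p hp; rw [mem_Dset] at *; simp; omega
  · intro p hp; rw [mem_Dset] at hp; ext <;> simp <;> omega
  · intro p hp; rw [mem_Dset] at hp; ext <;> simp <;> omega
  · intro p hp; rfl

def D'set (n : ℕ) : Finset (ℕ × ℕ) :=
  (Dset n).filter (fun p => 1 ≤ p.1 ∧ 1 ≤ p.2)

lemma mem_D'set {n : ℕ} {p : ℕ × ℕ} :
    p ∈ D'set n ↔ p.1 + p.2 ≤ n ∧ 1 ≤ p.1 ∧ 1 ≤ p.2 := by
  simp only [D'set, Finset.mem_filter, mem_Dset]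

lemma sum_D'_invol (n : ℕ) (f : ℕ × ℕ → K) :
    ∑ p ∈ D'set n, f (n - p.1 - p.2 + 1, p.2) = ∑ p ∈ D'set n, f p := by
  refine Finset.sum_nbij' (fun p => (n - p.1 - p.2 + 1, p.2)) (fun p => (n - p.1 - p.2 + 1, p.2))
    ?_ ?_ ?_ ?_ ?_
  · intro p hp; rw [mem_D'set] at *; simp; omega
  · intro p hp; rw [mem_D'set] at *; simp; omega
  · intro p hp; rw [mem_D'set] at hp; ext <;> simp <;> omega
  · intro p hp; rw [mem_D'set] at hp; ext <;> simp <;> omega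
  · intro p hp; rfl

lemma sum_D_fst0 (n : ℕ) (f : ℕ → K) :
    (∑ p ∈ Dset n, if p.1 = 0 then f p.2 else 0) = ∑ l ∈ Finset.range (n + 1), f l := by
  refine Eq.trans (sum_D n (fun k l => if k = 0 then f l else 0)).symm ?_
  rw [Finset.sum_eq_single_of_mem 0 (by simp)]
  · simp
  · intro k hk hk0
    apply Finset.sum_eq_zero
    intro l hl
    rw [if_neg hk0]

lemma sum_D_diag (n : ℕ) (g : ℕ → ℕ → K) :
    (∑ p ∈ Dset n, if p.1 + p.2 = n then g p.1 p.2 else 0)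
      = ∑ k ∈ Finset.range (n + 1), g k (n - k) := by
  refine Eq.trans (sum_D n (fun k l => if k + l = n then g k l else 0)).symm ?_
  refine Finset.sum_congr rfl fun k hk => ?_
  have hk' : k ≤ n := by simpa [Nat.lt_succ_iff] using hk
  have : (∑ l ∈ Finset.range (n - k + 1), if k + l = n then g k l else 0)
      = ∑ l ∈ Finset.range (n - k + 1), if l = n - k then g k l else 0 := by
    refine Finset.sum_congr rfl fun l hl => ?_
    by_cases h2 : l = n - k
    · rw [if_pos (by omega), if_pos h2]
    · rw [if_neg (by omega), if_neg h2]
  rw [this, Finset.sum_ite_eq' (Finset.range (n - k + 1)) (n - k) (g k)]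
  rw [if_pos (by simp)]

/-! ### canonical term values -/

def G1t (w : List K) (A B : List K → K) (k l : ℕ) : K :=
  A (w.take k ++ addFirst (((w.drop k).take l).sum) (w.drop (k + l))) * B ((w.drop k).take l)

def G2t (w : List K) (A B : List K → K) (k l : ℕ) : K :=
  A (w.take (k - 1) ++ addFirst (((w.drop (k - 1)).take l).sum) (w.drop (k + l - 1))) *
    B ((-(((w.drop k).take l).sum)) :: ((w.drop k).take l).dropLast)

lemma amitU_eval (A B : List K → K) (w : List K) :
    amitU B A w = ∑ p ∈ Dset w.length,
      (if 1 ≤ p.2 ∧ p.1 + p.2 < w.length then G1t w A B p.1 p.2 else 0) := by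
  refine Eq.trans (sum_splits3_eq w _) ?_
  refine Eq.trans (sum_D w.length _) ?_
  refine Finset.sum_congr rfl fun p hp => ?_
  have hp' : p.1 + p.2 ≤ w.length := mem_Dset.mp hp
  obtain ⟨k, l⟩ := p
  dsimp only at hp' ⊢
  by_cases hl : l = 0
  · subst hl
    rw [List.take_zero, if_neg (by omega)]
  · by_cases hc : k + l = w.length
    · have hnil : (w.drop k).drop l = [] := by
        rw [List.drop_drop]; exact List.drop_eq_nil_of_le (by omega)
      rw [hnil, if_neg (by omega)]
      cases hb : (w.drop k).take l <;> rfl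
    · have hbne : (w.drop k).take l ≠ [] := by
        apply List.ne_nil_of_length_pos
        rw [List.length_take, List.length_drop]
        omega
      have hcne : (w.drop k).drop l ≠ [] := by
        apply List.ne_nil_of_length_pos
        rw [List.length_drop, List.length_drop]
        omega
      rw [if_pos ⟨by omega, by omega⟩]
      simp only [G1t]
      rw [← List.drop_drop]

lemma anitU_eval (A B : List K → K) (w : List K) :
    anitU (fun w' => -(pushM B w')) A w = ∑ p ∈ Dset w.length,
      (if 1 ≤ p.1 ∧ 1 ≤ p.2 then -(G2t w A B p.1 p.2) else 0) := by
  refine Eq.trans (sum_splits3_eq w _) ?_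
  refine Eq.trans (sum_D w.length _) ?_
  refine Finset.sum_congr rfl fun p hp => ?_
  have hp' : p.1 + p.2 ≤ w.length := mem_Dset.mp hp
  obtain ⟨k, l⟩ := p
  dsimp only at hp' ⊢
  by_cases hk : k = 0
  · subst hk
    rw [List.take_zero, if_neg (by omega)]
  · have hane : w.take k ≠ [] := by
      apply List.ne_nil_of_length_pos
      rw [List.length_take]
      omega
    obtain ⟨a0, a', ha⟩ := List.exists_cons_of_ne_nil hane
    by_cases hl : l = 0
    · subst hl
      rw [List.take_zero, if_neg (by omega), ha]
      try rfl
    · have hbne : (w.drop k).take l ≠ [] := by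
        apply List.ne_nil_of_length_pos
        rw [List.length_take, List.length_drop]
        omega
      obtain ⟨b0, b', hb⟩ := List.exists_cons_of_ne_nil hbne
      rw [if_pos ⟨by omega, by omega⟩]
      simp only [G2t]
      rw [← addLast_form w k l (by omega) (by omega) (by omega)]
      rw [← mul_neg]
      rw [ha, hb]
      try rfl

lemma amitV_eval (A B : List K → K) (w : List K) :
    amitV (swapUV B) (swapUV A) (swapVargs w) = ∑ p ∈ Dset w.length,
      (if 1 ≤ p.2 ∧ p.1 + p.2 < w.length then G1t w A B (w.length - p.1 - p.2) p.2 else 0) := by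
  refine Eq.trans (sum_splits3_eq (swapVargs w) _) ?_
  rw [swapVargs_length]
  refine Eq.trans (sum_D w.length _) ?_
  refine Finset.sum_congr rfl fun p hp => ?_
  have hp' : p.1 + p.2 ≤ w.length := mem_Dset.mp hp
  obtain ⟨k, l⟩ := p
  dsimp only at hp' ⊢
  by_cases hl : l = 0
  · subst hl
    rw [List.take_zero, if_neg (by omega)]
  · by_cases hc : k + l = w.length
    · have hnil : ((swapVargs w).drop k).drop l = [] := by
        rw [List.drop_drop]
        refine List.drop_eq_nil_of_le ?_
        rw [swapVargs_length]
        omega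
      rw [hnil, if_neg (by omega)]
      cases hb : ((swapVargs w).drop k).take l <;> rfl
    · have hbne : ((swapVargs w).drop k).take l ≠ [] := by
        apply List.ne_nil_of_length_pos
        rw [List.length_take, List.length_drop, swapVargs_length]
        omega
      obtain ⟨b0, b', hb⟩ := List.exists_cons_of_ne_nil hbne
      rw [if_pos ⟨by omega, by omega⟩]
      simp only [G1t]
      rw [show (w.length - k - l) + l = w.length - k from by omega]
      rw [← swapU_F1 w k l (by omega), ← swapU_F3 w k l (by omega)]
      rw [List.drop_drop]
      have hdc := swapVargs_drop_cons w (k + l) (by omega)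
      rw [show w.length - (k + l) = w.length - k - l from by omega] at hdc
      rw [hdc, hb]
      try rfl

lemma anitV_eval (A B : List K → K) (w : List K) :
    anitV (swapUV B) (swapUV A) (swapVargs w) = ∑ p ∈ Dset w.length,
      (if 1 ≤ p.1 ∧ 1 ≤ p.2 then G2t w A B (w.length - p.1 - p.2 + 1) p.2 else 0) := by
  refine Eq.trans (sum_splits3_eq (swapVargs w) _) ?_
  rw [swapVargs_length]
  refine Eq.trans (sum_D w.length _) ?_
  refine Finset.sum_congr rfl fun p hp => ?_
  have hp' : p.1 + p.2 ≤ w.length := mem_Dset.mp hp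
  obtain ⟨k, l⟩ := p
  dsimp only at hp' ⊢
  by_cases hk : k = 0
  · subst hk
    rw [List.take_zero, if_neg (by omega)]
  · have hane : (swapVargs w).take k ≠ [] := by
      apply List.ne_nil_of_length_pos
      rw [List.length_take, swapVargs_length]
      omega
    obtain ⟨a0, a', ha⟩ := List.exists_cons_of_ne_nil hane
    by_cases hl : l = 0
    · subst hl
      rw [List.take_zero, if_neg (by omega), ha]
      try rfl
    · have hbne : ((swapVargs w).drop k).take l ≠ [] := by
        apply List.ne_nil_of_length_pos
        rw [List.length_take, List.length_drop, swapVargs_length]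
        omega
      obtain ⟨b0, b', hb⟩ := List.exists_cons_of_ne_nil hbne
      rw [if_pos ⟨by omega, by omega⟩]
      simp only [G2t]
      rw [show w.length - k - l + 1 - 1 = w.length - k - l from by omega]
      rw [show w.length - k - l + 1 + l - 1 = w.length - k from by omega]
      rw [← swapU_F1 w k l (by omega)]
      rw [← swapU_F4 w k l (by omega) (by omega) (by omega)]
      rw [getLastD_take_swapVargs w k (by omega) (by omega)]
      rw [List.drop_drop]
      try rfl

lemma muU_eval (A B : List K → K) (w : List K) :
    mu A B w = ∑ k ∈ Finset.range (w.length + 1), G1t w A B k (w.length - k) := by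
  refine Finset.sum_congr rfl fun k hk => ?_
  have hk' : k ≤ w.length := Finset.mem_range_succ_iff.mp hk
  simp only [G1t]
  rw [show k + (w.length - k) = w.length from by omega, List.drop_length]
  rw [List.take_of_length_le (le_of_eq (show (w.drop k).length = w.length - k from List.length_drop))]
  simp only [addFirst, List.append_nil]

lemma muV_eval (A B : List K → K) (w : List K) (hA0 : A [] = 0) :
    mu (swapUV A) (swapUV B) (swapVargs w)
      = ∑ l ∈ Finset.range (w.length + 1), G1t w A B 0 l := by
  have hmu : mu (swapUV A) (swapUV B) (swapVargs w)
      = ∑ k ∈ Finset.range (w.length + 1),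
          swapUV A ((swapVargs w).take k) * swapUV B ((swapVargs w).drop k) := by
    simp only [mu, swapVargs_length]
  rw [hmu, ← Finset.sum_range_reflect (fun l => G1t w A B 0 l) (w.length + 1)]
  refine Finset.sum_congr rfl fun k hk => ?_
  have hk' : k ≤ w.length := Finset.mem_range_succ_iff.mp hk
  rw [show w.length + 1 - 1 - k = w.length - k from by omega]
  by_cases hk0 : k = 0
  · subst hk0
    rw [List.take_zero]
    have h0 : swapUV A [] = 0 := hA0
    rw [h0, zero_mul]
    have h1 : G1t w A B 0 (w.length - 0) = 0 := by
      simp only [G1t, List.take_zero, List.nil_append, List.drop_zero, Nat.zero_add,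
        Nat.sub_zero, List.drop_length]
      simp only [addFirst]
      rw [hA0, zero_mul]
    rw [h1]
  · have h1 : k + (w.length - k) = w.length := by omega
    have e0 : (swapVargs w).take k
        = (swapVargs w).take k ++ (swapVargs w).drop (k + (w.length - k)) := by
      rw [h1, ← swapVargs_length w, List.drop_length, List.append_nil]
    have eA := swapU_F1 w k (w.length - k) (by omega)
    rw [← e0] at eA
    rw [show w.length - k - (w.length - k) = 0 from by omega] at eA
    rw [List.take_zero, List.nil_append, List.drop_zero] at eA
    have eB := swapU_F1 w 0 k (by omega)
    rw [List.take_zero, List.nil_append, Nat.zero_add, Nat.sub_zero] at eB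
    rw [List.drop_length] at eB
    simp only [addFirst, List.append_nil] at eB
    show A (swapUargs ((swapVargs w).take k)) * B (swapUargs ((swapVargs w).drop k)) = _
    rw [eA, eB]
    simp only [G1t, List.take_zero, List.nil_append, List.drop_zero, Nat.zero_add]

lemma G1t_right0 (A B : List K → K) (w : List K) (hB0 : B [] = 0) (k : ℕ) :
    G1t w A B k 0 = 0 := by
  simp only [G1t, List.take_zero, hB0, mul_zero]

lemma H1 (A B : List K → K) (hA0 : A [] = 0) (hB0 : B [] = 0) (w : List K) :
    amitV (swapUV B) (swapUV A) (swapVargs w) + mu (swapUV A) (swapUV B) (swapVargs w)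
      = amitU B A w + mu A B w := by
  rw [amitV_eval, muV_eval A B w hA0, amitU_eval, muU_eval]
  rw [← sum_D_fst0 w.length (fun l => G1t w A B 0 l)]
  rw [← sum_D_diag w.length (fun k l => G1t w A B k l)]
  have e1 : (∑ p ∈ Dset w.length,
        if 1 ≤ p.2 ∧ p.1 + p.2 < w.length then G1t w A B (w.length - p.1 - p.2) p.2 else 0)
      = ∑ p ∈ Dset w.length, (if 1 ≤ p.1 ∧ 1 ≤ p.2 then G1t w A B p.1 p.2 else 0) := by
    refine Eq.trans ?_ (sum_D_invol w.length
      (fun p => if 1 ≤ p.1 ∧ 1 ≤ p.2 then G1t w A B p.1 p.2 else 0))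
    refine Finset.sum_congr rfl fun p hp => ?_
    have hp' : p.1 + p.2 ≤ w.length := mem_Dset.mp hp
    by_cases h2 : 1 ≤ p.2 ∧ p.1 + p.2 < w.length
    · rw [if_pos h2, if_pos ⟨by omega, h2.1⟩]
    · rw [if_neg h2, if_neg (by omega)]
  rw [e1, ← Finset.sum_add_distrib, ← Finset.sum_add_distrib]
  refine Finset.sum_congr rfl fun p hp => ?_
  have hp' : p.1 + p.2 ≤ w.length := mem_Dset.mp hp
  obtain ⟨k, l⟩ := p
  dsimp only at hp' ⊢
  by_cases hl : l = 0
  · subst hl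
    simp only [G1t_right0 A B w hB0]
    split_ifs <;> simp
  · by_cases hk : k = 0
    · subst hk
      by_cases hn : 0 + l = w.length
      · rw [if_neg (show ¬(1 ≤ (0:ℕ) ∧ 1 ≤ l) from by omega),
          if_pos (show (0:ℕ) = 0 from rfl),
          if_neg (show ¬(1 ≤ l ∧ 0 + l < w.length) from by omega),
          if_pos hn]
        try ring
      · rw [if_neg (show ¬(1 ≤ (0:ℕ) ∧ 1 ≤ l) from by omega),
          if_pos (show (0:ℕ) = 0 from rfl),
          if_pos (show (1 ≤ l ∧ 0 + l < w.length) from by omega),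
          if_neg hn]
        try ring
    · by_cases hn : k + l = w.length
      · rw [if_pos (show 1 ≤ k ∧ 1 ≤ l from by omega), if_neg hk,
          if_neg (show ¬(1 ≤ l ∧ k + l < w.length) from by omega),
          if_pos hn]
        try ring
      · rw [if_pos (show 1 ≤ k ∧ 1 ≤ l from by omega), if_neg hk,
          if_pos (show 1 ≤ l ∧ k + l < w.length from by omega),
          if_neg hn]
        try ring

lemma H2 (A B : List K → K) (w : List K) :
    anitV (swapUV B) (swapUV A) (swapVargs w)
      = - anitU (fun w' => -(pushM B w')) A w := by
  rw [anitV_eval, anitU_eval]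
  have e1 : (∑ p ∈ Dset w.length,
        if 1 ≤ p.1 ∧ 1 ≤ p.2 then G2t w A B (w.length - p.1 - p.2 + 1) p.2 else 0)
      = ∑ p ∈ D'set w.length, G2t w A B (w.length - p.1 - p.2 + 1) p.2 := by
    rw [D'set, Finset.sum_filter]
  have e2 : (∑ p ∈ Dset w.length,
        if 1 ≤ p.1 ∧ 1 ≤ p.2 then -(G2t w A B p.1 p.2) else 0)
      = ∑ p ∈ D'set w.length, -(G2t w A B p.1 p.2) := by
    rw [D'set, Finset.sum_filter]
  rw [e1, e2, sum_D'_invol w.length (fun p => G2t w A B p.1 p.2), Finset.sum_neg_distrib,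
    neg_neg]

/-- for all moulds `A, B` in ARI,
`swap(ari(swap A, swap B)) = axit(B,-push B)·A - axit(A,-push A)·B + lu(A,B)`. -/
theorem swap_ari_swap_eq_axit (A B : List K → K)
    (hA0 : A [] = 0) (hB0 : B [] = 0) :
    swapVU (ariV (swapUV A) (swapUV B)) =
      fun w => axitU B (fun w' => -(pushM B w')) A w
        - axitU A (fun w' => -(pushM A w')) B w + lu A B w := by
  funext w
  have h1 := H1 A B hA0 hB0 w
  have h1' := H1 B A hB0 hA0 w
  have h2 := H2 A B w
  have h2' := H2 B A w
  simp only [swapVU, ariV, aritV, lu, axitU]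
  linear_combination h1 - h1' - h2 + h2'
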